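/- arXiv:1911.07979 — 4 statements merged into one kernel-verified Lean document; each statement's English description precedes it below -/
import Mathlib

section
/- Let T*_N be an optimum tree on N vertices and T*_{N−1} an optimum tree on N−1 vertices (trees maximizing the maximum number of vertices pairwise at distance at least h). Then 0 ≤ n*_h(T*_N) − n*_h(T*_{N−1}) ≤ 1, i.e., the optimum number of pairwise h-far vertices increases by at most one when the number of tree vertices increases by one. -/
/-- `nstar G h` is the maximum number of vertices of `G` that are pairwise at
graph distance at least `h`. -/
noncomputable def nstar {V : Type*} (G : SimpleGraph V) (h : ℕ) : ℕ :=
  sSup {k | ∃ S : Finset V, S.card = k ∧ ∀ i ∈ S, ∀ j ∈ S, i ≠ j → h ≤ G.dist i j}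


section aux
variable {V W : Type*} [Fintype V] [Fintype W]

lemma nstar_bddAbove (G : SimpleGraph V) (h : ℕ) :
    BddAbove {k | ∃ S : Finset V, S.card = k ∧ ∀ i ∈ S, ∀ j ∈ S, i ≠ j → h ≤ G.dist i j} := by
  refine ⟨Fintype.card V, fun k hk => ?_⟩
  obtain ⟨S, hS, -⟩ := hk
  exact hS ▸ S.card_le_univ

lemma card_le_nstar (G : SimpleGraph V) (h : ℕ) (S : Finset V)
    (hS : ∀ i ∈ S, ∀ j ∈ S, i ≠ j → h ≤ G.dist i j) : S.card ≤ nstar G h :=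
  le_csSup (nstar_bddAbove G h) ⟨S, rfl, hS⟩

lemma nstar_exists (G : SimpleGraph V) (h : ℕ) :
    ∃ S : Finset V, S.card = nstar G h ∧ ∀ i ∈ S, ∀ j ∈ S, i ≠ j → h ≤ G.dist i j := by
  have hne : {k | ∃ S : Finset V, S.card = k ∧ ∀ i ∈ S, ∀ j ∈ S, i ≠ j → h ≤ G.dist i j}.Nonempty :=
    ⟨0, ∅, by simp, by simp⟩
  exact Nat.sSup_mem hne (nstar_bddAbove G h)

lemma nstar_le_nstar (G : SimpleGraph V) (G' : SimpleGraph W) (h : ℕ) (f : V ↪ W)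
    (hf : ∀ a b : V, a ≠ b → h ≤ G.dist a b → h ≤ G'.dist (f a) (f b)) :
    nstar G h ≤ nstar G' h := by
  obtain ⟨S, hcard, hpair⟩ := nstar_exists G h
  have : (S.map f).card ≤ nstar G' h := by
    refine card_le_nstar G' h _ ?_
    rintro i hi j hj hij
    simp only [Finset.mem_map] at hi hj
    obtain ⟨a, ha, rfl⟩ := hi
    obtain ⟨b, hb, rfl⟩ := hj
    have hab : a ≠ b := fun e => hij (by rw [e])
    exact hf a b hab (hpair a ha b hb hab)
  simpa [Finset.card_map, hcard] using this

end aux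

open SimpleGraph

section del
variable {N : ℕ} (T : SimpleGraph (Fin N))

lemma lift_walk_comap {v : Fin N} (φ : Fin (N - 1) ≃ {x : Fin N // x ≠ v})
    {x y : Fin N} (p : T.Walk x y) (hp : v ∉ p.support) (a b : Fin (N - 1))
    (ha : (φ a : Fin N) = x) (hb : (φ b : Fin N) = y) :
    Nonempty ((T.comap (fun a => (φ a : Fin N))).Walk a b) := by
  induction p generalizing a with
  | nil =>
    have : a = b := φ.injective (Subtype.ext (ha.trans hb.symm))
    exact this ▸ ⟨SimpleGraph.Walk.nil⟩
  | @cons x c y hadj p ih =>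
    rw [SimpleGraph.Walk.support_cons, List.mem_cons] at hp
    push_neg at hp
    have hc : c ≠ v := fun e => hp.2 (e ▸ p.start_mem_support)
    set c' : Fin (N - 1) := φ.symm ⟨c, hc⟩ with hc'
    have hfc : (φ c' : Fin N) = c := by rw [hc', φ.apply_symm_apply]
    have hadj' : (T.comap (fun a => (φ a : Fin N))).Adj a c' := by
      show T.Adj (φ a : Fin N) (φ c' : Fin N)
      rw [ha, hfc]; exact hadj
    obtain ⟨q⟩ := ih hp.2 c' hfc hb
    exact ⟨SimpleGraph.Walk.cons hadj' q⟩

lemma exists_del_tree (hN : 2 ≤ N) (hT : T.IsTree) :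
    ∃ U : SimpleGraph (Fin (N - 1)), U.IsTree ∧ ∀ h : ℕ, nstar T h ≤ nstar U h + 1 := by
  have hconn := hT.isConnected
  have hN1 : 0 < N - 1 := by omega
  have hN0 : 0 < N := by omega
  set r0 : Fin N := ⟨0, hN0⟩ with hr0
  obtain ⟨v, -, hv⟩ := Finset.exists_max_image (Finset.univ : Finset (Fin N)) (T.dist r0)
    ⟨r0, Finset.mem_univ _⟩
  have hvmax : ∀ x : Fin N, T.dist r0 x ≤ T.dist r0 v := fun x => hv x (Finset.mem_univ x)
  have avoid : ∀ x : Fin N, x ≠ v → ∃ p : T.Walk r0 x, v ∉ p.support := by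
    intro x hx
    obtain ⟨p, hp⟩ := (hconn r0 x).exists_walk_length_eq_dist
    refine ⟨p, fun hvp => ?_⟩
    have h1 := SimpleGraph.dist_le (p.takeUntil v hvp)
    have h2 := SimpleGraph.dist_le (p.dropUntil v hvp)
    have h3 : (p.takeUntil v hvp).length + (p.dropUntil v hvp).length = p.length := by
      have := congrArg SimpleGraph.Walk.length (p.take_spec hvp)
      rwa [SimpleGraph.Walk.length_append] at this
    have h4 : 0 < T.dist v x := (hconn v x).pos_dist_of_ne (fun e => hx e.symm)
    have h5 := hvmax x
    omega
  have hcard : Fintype.card {x : Fin N // x ≠ v} = N - 1 := by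
    rw [Fintype.card_subtype_compl, Fintype.card_subtype_eq, Fintype.card_fin]
  have φ : Fin (N - 1) ≃ {x : Fin N // x ≠ v} :=
    Fintype.equivOfCardEq (by rw [hcard, Fintype.card_fin])
  set f : Fin (N - 1) → Fin N := fun a => (φ a : Fin N) with hfdef
  have finj : Function.Injective f := fun a b hab => φ.injective (Subtype.ext hab)
  set U : SimpleGraph (Fin (N - 1)) := T.comap f with hU
  let emb : U ↪g T := SimpleGraph.Embedding.comap ⟨f, finj⟩ T
  haveI : Nonempty (Fin (N - 1)) := ⟨⟨0, hN1⟩⟩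
  have hUconn : U.Connected := by
    rw [SimpleGraph.connected_iff]
    refine ⟨fun a b => ?_, inferInstance⟩
    obtain ⟨p1, hp1⟩ := avoid (f a) (φ a).2
    obtain ⟨p2, hp2⟩ := avoid (f b) (φ b).2
    have hp : v ∉ (p1.reverse.append p2).support := by
      rw [SimpleGraph.Walk.mem_support_append_iff, SimpleGraph.Walk.support_reverse,
        List.mem_reverse]
      tauto
    obtain ⟨q⟩ := lift_walk_comap T φ (p1.reverse.append p2) hp a b rfl rfl
    exact ⟨q⟩
  have hembinj : Function.Injective (emb.toHom : Fin (N - 1) → Fin N) := emb.injective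
  have hUacyc : U.IsAcyclic := by
    intro a c hc
    exact hT.IsAcyclic _ ((SimpleGraph.Walk.map_isCycle_iff_of_injective hembinj).2 hc)
  refine ⟨U, ⟨hUconn, hUacyc⟩, fun h => ?_⟩
  have hdist : ∀ a b : Fin (N - 1), T.dist (f a) (f b) ≤ U.dist a b := by
    intro a b
    obtain ⟨p, hp⟩ := (hUconn a b).exists_walk_length_eq_dist
    have h1 := SimpleGraph.dist_le (p.map emb.toHom)
    rw [SimpleGraph.Walk.length_map, hp] at h1
    exact h1
  obtain ⟨S, hScard, hSpair⟩ := nstar_exists T h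
  classical
  set S' : Finset (Fin N) := S.erase v with hS'
  set ψ : {x : Fin N // x ≠ v} → Fin (N - 1) := fun x => φ.symm x with hψ
  have hfψ : ∀ x : {x : Fin N // x ≠ v}, f (ψ x) = (x : Fin N) :=
    fun x => congrArg Subtype.val (φ.apply_symm_apply x)
  set S'' : Finset (Fin (N - 1)) :=
    S'.attach.image (fun x => ψ ⟨x.1, Finset.ne_of_mem_erase x.2⟩) with hS''
  have hcard'' : S''.card = S'.card := by
    rw [hS'', Finset.card_image_of_injective _ ?_, Finset.card_attach]
    intro x y hxy
    have h1 : (⟨x.1, Finset.ne_of_mem_erase x.2⟩ : {x : Fin N // x ≠ v})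
        = ⟨y.1, Finset.ne_of_mem_erase y.2⟩ := φ.symm.injective hxy
    have h2 : x.1 = y.1 := Subtype.mk_eq_mk.mp h1
    exact Subtype.ext h2
  have hfar : ∀ i ∈ S'', ∀ j ∈ S'', i ≠ j → h ≤ U.dist i j := by
    intro i hi j hj hij
    simp only [hS'', Finset.mem_image, Finset.mem_attach, true_and, Subtype.exists] at hi hj
    obtain ⟨x, hx, rfl⟩ := hi
    obtain ⟨y, hy, rfl⟩ := hj
    have hxy : x ≠ y := by rintro rfl; exact hij rfl
    have h1 : h ≤ T.dist x y :=
      hSpair x (Finset.mem_of_mem_erase hx) y (Finset.mem_of_mem_erase hy) hxy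
    have h2 := hdist (ψ ⟨x, Finset.ne_of_mem_erase hx⟩) (ψ ⟨y, Finset.ne_of_mem_erase hy⟩)
    rw [hfψ, hfψ] at h2
    exact le_trans h1 h2
  have hle : S''.card ≤ nstar U h := card_le_nstar U h S'' hfar
  have hcount : S.card ≤ S'.card + 1 := by
    by_cases hvS : v ∈ S
    · rw [hS', Finset.card_erase_of_mem hvS]; omega
    · rw [hS', Finset.erase_eq_of_notMem hvS]; omega
  omega
end del

open SimpleGraph

section add
variable (N : ℕ)

def eL : Fin (N - 1) → Fin N := Fin.castLE (Nat.sub_le N 1)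

def wL (hN : 2 ≤ N) : Fin N := ⟨N - 1, by omega⟩

def rL (hN : 2 ≤ N) : Fin (N - 1) := ⟨0, by omega⟩

lemma eL_inj : Function.Injective (eL N) := by
  intro a b hab
  have h : (eL N a).val = (eL N b).val := congrArg Fin.val hab
  exact Fin.ext h

lemma eL_ne_wL (hN : 2 ≤ N) (a : Fin (N - 1)) : eL N a ≠ wL N hN := by
  intro hc
  have := congrArg Fin.val hc
  simp only [eL, wL, Fin.castLE] at this
  omega

lemma eL_surj (hN : 2 ≤ N) (a : Fin N) (ha : a ≠ wL N hN) : ∃ a', eL N a' = a := by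
  have h1 : a.val ≠ N - 1 := fun hc => ha (Fin.ext hc)
  have h2 : a.val < N - 1 := by have := a.isLt; omega
  exact ⟨⟨a.val, h2⟩, rfl⟩

variable (T' : SimpleGraph (Fin (N - 1))) (hN : 2 ≤ N)

def addLeaf : SimpleGraph (Fin N) where
  Adj a b := (∃ a' b', T'.Adj a' b' ∧ eL N a' = a ∧ eL N b' = b) ∨
    (a = wL N hN ∧ b = eL N (rL N hN)) ∨ (a = eL N (rL N hN) ∧ b = wL N hN)
  symm := by
    constructor
    rintro a b (⟨a', b', hab, rfl, rfl⟩ | ⟨rfl, rfl⟩ | ⟨rfl, rfl⟩)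
    · exact Or.inl ⟨b', a', hab.symm, rfl, rfl⟩
    · exact Or.inr (Or.inr ⟨rfl, rfl⟩)
    · exact Or.inr (Or.inl ⟨rfl, rfl⟩)
  loopless := by
    constructor
    rintro a (⟨a', b', hab, rfl, hba⟩ | ⟨rfl, hc⟩ | ⟨hc, hc2⟩)
    · exact T'.loopless.irrefl a' ((eL_inj N hba) ▸ hab)
    · exact eL_ne_wL N hN _ hc.symm
    · exact eL_ne_wL N hN _ (hc ▸ hc2)

def homL : T' →g addLeaf N T' hN where
  toFun := eL N
  map_rel' := fun hab => Or.inl ⟨_, _, hab, rfl, rfl⟩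

lemma homL_apply (a : Fin (N - 1)) : homL N T' hN a = eL N a := rfl

lemma addLeaf_adj_eL {a b : Fin (N - 1)} (hab : (addLeaf N T' hN).Adj (eL N a) (eL N b)) :
    T'.Adj a b := by
  rcases hab with ⟨a', b', h, ha, hb⟩ | ⟨hc, -⟩ | ⟨-, hc⟩
  · rwa [eL_inj N ha, eL_inj N hb] at h
  · exact absurd hc (eL_ne_wL N hN a)
  · exact absurd hc (eL_ne_wL N hN b)

lemma addLeaf_adj_wL {x : Fin N} (hx : (addLeaf N T' hN).Adj (wL N hN) x) :
    x = eL N (rL N hN) := by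
  rcases hx with ⟨a', b', -, ha, rfl⟩ | ⟨-, rfl⟩ | ⟨hc, -⟩
  · exact absurd ha (eL_ne_wL N hN a')
  · rfl
  · exact absurd hc.symm (eL_ne_wL N hN _)

-- lifting walks of addLeaf avoiding wL back to T'
lemma addLeaf_lift {x y : Fin N} (p : (addLeaf N T' hN).Walk x y)
    (hp : wL N hN ∉ p.support) :
    ∀ x' y' (hx : eL N x' = x) (hy : eL N y' = y),
      ∃ q : T'.Walk x' y', q.map (homL N T' hN) = p.copy hx.symm hy.symm := by
  induction p with
  | nil =>
    intro x' y' hx hy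
    subst hx
    have : y' = x' := eL_inj N hy
    subst this
    exact ⟨SimpleGraph.Walk.nil, by simp; rfl⟩
  | @cons x b y hadj p ih =>
    intro x' y' hx hy
    subst hx
    rw [SimpleGraph.Walk.support_cons, List.mem_cons] at hp
    push_neg at hp
    have hb : b ≠ wL N hN := fun e => hp.2 (e ▸ p.start_mem_support)
    obtain ⟨b', rfl⟩ := eL_surj N hN b hb
    have hadj' : T'.Adj x' b' := addLeaf_adj_eL N T' hN hadj
    obtain ⟨q, hq⟩ := ih hp.2 b' y' rfl hy
    refine ⟨SimpleGraph.Walk.cons hadj' q, ?_⟩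
    rw [SimpleGraph.Walk.map_cons, SimpleGraph.Walk.copy_cons, hq]
    rfl

lemma addLeaf_connected (hT' : T'.Connected) : (addLeaf N T' hN).Connected := by
  haveI : Nonempty (Fin N) := ⟨⟨0, by omega⟩⟩
  rw [SimpleGraph.connected_iff]
  refine ⟨fun a b => ?_, inferInstance⟩
  have key : ∀ a : Fin N, (addLeaf N T' hN).Reachable (eL N (rL N hN)) a := by
    intro a
    by_cases ha : a = wL N hN
    · subst ha
      exact SimpleGraph.Adj.reachable (Or.inr (Or.inr ⟨rfl, rfl⟩))
    · obtain ⟨a', rfl⟩ := eL_surj N hN a ha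
      exact (hT' (rL N hN) a').map (homL N T' hN)
  exact (key a).symm.trans (key b)

lemma addLeaf_acyclic (hT' : T'.IsAcyclic) : (addLeaf N T' hN).IsAcyclic := by
  intro v c hc
  by_cases hw : wL N hN ∈ c.support
  · -- rotate cycle to start at wL
    have hc' := hc.rotate hw
    set c' := c.rotate _ hw with hc'def
    have hnotnil : ¬ c'.Nil := hc'.not_nil
    rw [SimpleGraph.Walk.not_nil_iff] at hnotnil
    obtain ⟨x, hadj, q, hq⟩ := hnotnil
    have hx : x = eL N (rL N hN) := addLeaf_adj_wL N T' hN hadj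
    subst hx
    rw [hq] at hc'
    rw [SimpleGraph.Walk.cons_isCycle_iff] at hc'
    -- last edge of q enters wL, so it is s(eL rL, wL)
    have hne : eL N (rL N hN) ≠ wL N hN := eL_ne_wL N hN _
    have hqnil : ¬ q.reverse.Nil := SimpleGraph.Walk.not_nil_of_ne (Ne.symm hne)
    rw [SimpleGraph.Walk.not_nil_iff] at hqnil
    obtain ⟨z, hadj2, q2, hq2⟩ := hqnil
    have hz : z = eL N (rL N hN) := addLeaf_adj_wL N T' hN hadj2
    subst hz
    have hmem : s(wL N hN, eL N (rL N hN)) ∈ q.reverse.edges := by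
      rw [hq2, SimpleGraph.Walk.edges_cons]
      exact List.mem_cons_self
    rw [SimpleGraph.Walk.edges_reverse, List.mem_reverse] at hmem
    exact hc'.2 hmem
  · -- cycle avoids wL: lift to T'
    have hv : v ≠ wL N hN := fun e => hw (e ▸ c.start_mem_support)
    obtain ⟨v', rfl⟩ := eL_surj N hN v hv
    obtain ⟨q, hq⟩ := addLeaf_lift N T' hN c hw v' v' rfl rfl
    have : (q.map (homL N T' hN)).IsCycle := by
      rw [hq]
      exact (SimpleGraph.Walk.isCycle_copy _ _).2 hc
    exact hT' q ((SimpleGraph.Walk.map_isCycle_iff_of_injective (eL_inj N)).1 this)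

-- projection of walks, for the distance bound
def gL (hN : 2 ≤ N) : Fin N → Fin (N - 1) := fun x =>
  if hx : x.val < N - 1 then ⟨x.val, hx⟩ else rL N hN

lemma gL_eL (a : Fin (N - 1)) : gL N hN (eL N a) = a := by
  simp only [gL, eL, Fin.castLE]
  exact dif_pos a.isLt

lemma gL_wL : gL N hN (wL N hN) = rL N hN := by
  simp only [gL, wL]
  exact dif_neg (by omega)

lemma addLeaf_proj {x y : Fin N} (p : (addLeaf N T' hN).Walk x y) :
    ∃ q : T'.Walk (gL N hN x) (gL N hN y), q.length ≤ p.length := by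
  induction p with
  | nil => exact ⟨SimpleGraph.Walk.nil, le_rfl⟩
  | @cons x b y hadj p ih =>
    obtain ⟨q, hq⟩ := ih
    rcases hadj with ⟨a', b', h, rfl, rfl⟩ | ⟨rfl, rfl⟩ | ⟨rfl, rfl⟩
    · refine ⟨SimpleGraph.Walk.cons ?_ q, ?_⟩
      · rw [gL_eL, gL_eL]; exact h
      · exact Nat.succ_le_succ hq
    · refine ⟨q.copy ?_ rfl, ?_⟩
      · rw [gL_eL, gL_wL]
      · rw [SimpleGraph.Walk.length_copy]
        exact hq.trans (Nat.le_succ _)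
    · refine ⟨q.copy ?_ rfl, ?_⟩
      · rw [gL_eL, gL_wL]
      · rw [SimpleGraph.Walk.length_copy]
        exact hq.trans (Nat.le_succ _)

lemma addLeaf_dist (hT' : T'.Connected) (a b : Fin (N - 1)) :
    T'.dist a b ≤ (addLeaf N T' hN).dist (eL N a) (eL N b) := by
  obtain ⟨p, hp⟩ :=
    ((addLeaf_connected N T' hN hT') (eL N a) (eL N b)).exists_walk_length_eq_dist
  obtain ⟨q, hq⟩ := addLeaf_proj N T' hN p
  have h1 : T'.dist (gL N hN (eL N a)) (gL N hN (eL N b)) ≤ q.length :=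
    SimpleGraph.dist_le q
  have h2 : T'.dist a b = T'.dist (gL N hN (eL N a)) (gL N hN (eL N b)) := by
    rw [gL_eL, gL_eL]
  omega

end add
/-- The optimum number of pairwise `h`-far vertices of optimum trees increases by
at most one when the number of tree vertices increases by one. -/
theorem optimum_tree_nstar_step
    (N h : ℕ) (hN : 2 ≤ N)
    (T : SimpleGraph (Fin N)) (T' : SimpleGraph (Fin (N - 1)))
    (hT : T.IsTree) (hT' : T'.IsTree)
    (hTopt : ∀ U : SimpleGraph (Fin N), U.IsTree → nstar U h ≤ nstar T h)
    (hT'opt : ∀ U : SimpleGraph (Fin (N - 1)), U.IsTree → nstar U h ≤ nstar T' h) :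
    nstar T' h ≤ nstar T h ∧ nstar T h ≤ nstar T' h + 1 := by
  constructor
  · have hU : (addLeaf N T' hN).IsTree :=
      ⟨addLeaf_connected N T' hN hT'.isConnected, addLeaf_acyclic N T' hN hT'.IsAcyclic⟩
    have h1 : nstar T' h ≤ nstar (addLeaf N T' hN) h := by
      refine nstar_le_nstar T' _ h ⟨eL N, eL_inj N⟩ ?_
      intro a b hab hd
      exact le_trans hd (addLeaf_dist N T' hN hT'.isConnected a b)
    exact le_trans h1 (hTopt _ hU)
  · obtain ⟨U, hUtree, hUle⟩ := exists_del_tree T hN hT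
    exact le_trans (hUle h) (Nat.add_le_add_right (hT'opt U hUtree) 1)
end

section
/- Let h be even. Among all trees on N vertices, the maximum possible value of n*_h (the maximum number of vertices pairwise at distance at least h) equals ⌊(N−1)/(h/2)⌋, and this maximum is attained by a balanced starlike tree of height h/2. -/
open SimpleGraph

namespace TreeNstar

/-- parent of vertex `v ≥ 1` in the spider -/
def P (m v : ℕ) : ℕ := if (v-1) % m = 0 then 0 else v - 1
/-- depth of vertex `v` -/
def D (m v : ℕ) : ℕ := if v = 0 then 0 else (v-1) % m + 1
/-- branch of vertex `v ≥ 1` -/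
def Br (m v : ℕ) : ℕ := (v-1) / m

lemma mod_pred {m a : ℕ} (hm : 0 < m) (h : a % m ≠ 0) : (a-1) % m = a % m - 1 := by
  have h1 : m * (a / m) + a % m = a := Nat.div_add_mod a m
  have h2 : a % m < m := Nat.mod_lt _ hm
  have h3 : a - 1 = m * (a / m) + (a % m - 1) := by omega
  rw [h3, Nat.mul_add_mod]
  exact Nat.mod_eq_of_lt (by omega)

lemma div_pred {m a : ℕ} (hm : 0 < m) (h : a % m ≠ 0) : (a-1) / m = a / m := by
  have h1 : m * (a / m) + a % m = a := Nat.div_add_mod a m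
  have h2 : a % m < m := Nat.mod_lt _ hm
  have h3 : a - 1 = m * (a / m) + (a % m - 1) := by omega
  rw [h3, Nat.mul_add_div hm, Nat.div_eq_of_lt (show a % m - 1 < m by omega), Nat.add_zero]

lemma P_lt {m v : ℕ} (hv : 1 ≤ v) : P m v < v := by
  unfold P; split <;> omega

lemma D_le {m v : ℕ} (hm : 1 ≤ m) : D m v ≤ m := by
  unfold D; split
  · omega
  · have := Nat.mod_lt (v-1) (show 0 < m by omega); omega

lemma D_P {m v : ℕ} (hm : 1 ≤ m) (hv : 1 ≤ v) : D m (P m v) + 1 = D m v := by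
  unfold P D
  by_cases h : (v-1) % m = 0
  · simp [h, if_neg (by omega : ¬ v = 0)]
  · have hv2 : 2 ≤ v := by
      by_contra h2
      have : v = 1 := by omega
      subst this; simp at h
    rw [if_neg h, if_neg (by omega : ¬ v - 1 = 0), if_neg (by omega : ¬ v = 0),
      mod_pred (by omega) h]
    omega

lemma Br_P {m v : ℕ} (hm : 1 ≤ m) (h : (v-1) % m ≠ 0) : Br m (v-1) = Br m v :=
  div_pred (by omega) h

/-- The balanced starlike "spider" tree. -/
def spider (N m : ℕ) : SimpleGraph (Fin N) :=
  SimpleGraph.fromRel (fun a b => (b:ℕ) ≠ 0 ∧ (a:ℕ) = P m (b:ℕ))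

lemma adj_cases {N m : ℕ} {a b : Fin N} (h : (spider N m).Adj a b) :
    ((b:ℕ) ≠ 0 ∧ (a:ℕ) = P m (b:ℕ)) ∨ ((a:ℕ) ≠ 0 ∧ (b:ℕ) = P m (a:ℕ)) := by
  simp only [spider, fromRel_adj] at h
  tauto

lemma adj_parent {N m : ℕ} {a b : Fin N} (hb : (b:ℕ) ≠ 0) (ha : (a:ℕ) = P m (b:ℕ)) :
    (spider N m).Adj a b := by
  simp only [spider, fromRel_adj]
  refine ⟨?_, Or.inl ⟨hb, ha⟩⟩
  intro hab
  have := P_lt (m := m) (v := (b:ℕ)) (by omega)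
  rw [hab] at ha
  omega


/-! ### Potentials and distance lower bounds -/

lemma abs_potential_le {V : Type*} {G : SimpleGraph V} (f : V → ℤ)
    (hf : ∀ a b, G.Adj a b → |f a - f b| ≤ 1) {u v : V} (p : G.Walk u v) :
    |f u - f v| ≤ p.length := by
  induction p with
  | nil => simp
  | cons h q ih =>
    rename_i a b c
    calc |f a - f c| ≤ |f a - f b| + |f b - f c| := abs_sub_le _ _ _
    _ ≤ 1 + q.length := add_le_add (hf _ _ h) ih
    _ ≤ _ := by push_cast [SimpleGraph.Walk.length_cons]; omega

lemma dist_ge_potential {V : Type*} {G : SimpleGraph V} (f : V → ℤ)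
    (hf : ∀ a b, G.Adj a b → |f a - f b| ≤ 1) {u v : V} (hr : G.Reachable u v) :
    |f u - f v| ≤ (G.dist u v : ℤ) := by
  obtain ⟨p, hp⟩ := hr.exists_walk_length_eq_dist
  simpa [hp] using abs_potential_le f hf p

/-! ### Ball size lower bound -/

/-- closed ball of radius `j` -/
noncomputable def ball {N : ℕ} (G : SimpleGraph (Fin N)) (x : Fin N) (j : ℕ) : Finset (Fin N) :=
  Finset.univ.filter (fun v => G.dist x v ≤ j)

lemma mem_ball {N : ℕ} {G : SimpleGraph (Fin N)} {x v : Fin N} {j : ℕ} :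
    v ∈ ball G x j ↔ G.dist x v ≤ j := by simp [ball]

lemma ball_card {N : ℕ} {G : SimpleGraph (Fin N)} (hc : G.Connected) (x : Fin N) :
    ∀ j, j + 1 ≤ N → j + 1 ≤ (ball G x j).card := by
  intro j
  induction j with
  | zero =>
    intro _
    exact Finset.card_pos.mpr ⟨x, mem_ball.mpr (by simp)⟩
  | succ j ih =>
    intro hN
    by_contra hlt
    push_neg at hlt
    have hsub : ball G x j ⊆ ball G x (j+1) := fun v hv => mem_ball.mpr (by
      have := mem_ball.mp hv; omega)
    have h1 : j + 1 ≤ (ball G x j).card := ih (by omega)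
    have heq : ball G x j = ball G x (j+1) :=
      Finset.eq_of_subset_of_card_le hsub (by omega)
    have hne : (Finset.univ \ ball G x (j+1)).Nonempty := by
      rw [Finset.sdiff_nonempty]
      intro hsub2
      have := Finset.card_le_card hsub2
      simp only [Finset.card_univ, Fintype.card_fin] at this
      omega
    obtain ⟨w, hw, hwmin⟩ := Finset.exists_min_image _ (fun v => G.dist x v) hne
    have hwb : ¬ G.dist x w ≤ j + 1 := by
      have := (Finset.mem_sdiff.mp hw).2
      intro hh; exact this (mem_ball.mpr hh)
    obtain ⟨p, hp⟩ := (hc x w).exists_walk_length_eq_dist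
    cases hrev : p.reverse with
    | nil =>
      have h0 : p.length = 0 := by rw [← SimpleGraph.Walk.length_reverse, hrev]; simp
      omega
    | cons h q =>
      rename_i y
      have hlen : q.length + 1 = G.dist x w := by
        have h0 : p.length = q.length + 1 := by
          rw [← SimpleGraph.Walk.length_reverse, hrev]; simp
        omega
      have hdy : G.dist x y ≤ G.dist x w - 1 := by
        have := G.dist_le q.reverse
        rw [SimpleGraph.Walk.length_reverse] at this
        omega
      by_cases hy : y ∈ ball G x (j+1)
      · rw [← heq] at hy
        have hxy : G.dist x y ≤ j := mem_ball.mp hy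
        have hyw : G.dist y w ≤ 1 := by
          have := G.dist_le (SimpleGraph.Walk.cons h.symm SimpleGraph.Walk.nil)
          simpa using this
        have := hc.dist_triangle (u := x) (v := y) (w := w)
        omega
      · have : G.dist x w ≤ G.dist x y := by
          apply hwmin
          rw [Finset.mem_sdiff]
          exact ⟨Finset.mem_univ _, hy⟩
        omega

/-! ### Upper bound for trees -/

lemma tree_bound {N m : ℕ} (hm : 1 ≤ m) (hN : m + 1 ≤ N) {G : SimpleGraph (Fin N)}
    (hc : G.Connected) {S : Finset (Fin N)}
    (hS : ∀ i ∈ S, ∀ j ∈ S, i ≠ j → 2 * m ≤ G.dist i j) :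
    S.card * m ≤ N - 1 := by
  rcases S.eq_empty_or_nonempty with rfl | ⟨r, hr⟩
  · simp
  set f : Fin N → Finset (Fin N) := fun s => if s = r then ball G s m else ball G s (m-1)
    with hf
  have hfs : ∀ s, f s = if s = r then ball G s m else ball G s (m-1) := fun s => rfl
  have hfsub : ∀ s, f s ⊆ ball G s m := by
    intro s v hv
    rw [hfs] at hv
    split at hv
    · exact hv
    · exact mem_ball.mpr (by have := mem_ball.mp hv; omega)
  have hdisj : ∀ s ∈ S, ∀ t ∈ S, s ≠ t → Disjoint (f s) (f t) := by
    intro s hs t ht hst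
    rw [Finset.disjoint_left]
    intro v hvs hvt
    have h2m := hS s hs t ht hst
    have htri := hc.dist_triangle (u := s) (v := v) (w := t)
    have hcomm : G.dist v t = G.dist t v := G.dist_comm
    have hsv : G.dist s v ≤ m := mem_ball.mp (hfsub s hvs)
    have htv : G.dist t v ≤ m := mem_ball.mp (hfsub t hvt)
    have key : G.dist s v ≤ m - 1 ∨ G.dist t v ≤ m - 1 := by
      rcases eq_or_ne s r with rfl | hsr
      · right
        have : f t = ball G t (m-1) := by rw [hfs]; simp [hst.symm]
        rw [this] at hvt
        exact mem_ball.mp hvt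
      · left
        have : f s = ball G s (m-1) := by rw [hfs]; simp [hsr]
        rw [this] at hvs
        exact mem_ball.mp hvs
    omega
  have hcard : ∑ s ∈ S, (f s).card ≤ N := by
    rw [← Finset.card_biUnion hdisj]
    calc (S.biUnion f).card ≤ Finset.univ.card := Finset.card_le_univ _
    _ = N := by simp
  have hrcard : m + 1 ≤ (f r).card := by
    have : f r = ball G r m := by rw [hfs]; simp
    rw [this]
    exact ball_card hc r m (by omega)
  have hscard : ∀ s ∈ S.erase r, m ≤ (f s).card := by
    intro s hs
    have hsr := (Finset.mem_erase.mp hs).1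
    have : f s = ball G s (m-1) := by rw [hfs]; simp [hsr]
    rw [this]
    have := ball_card hc s (m-1) (by omega)
    omega
  have hsum : (S.erase r).card * m + (m + 1) ≤ ∑ s ∈ S, (f s).card := by
    rw [← Finset.add_sum_erase _ (fun s => (f s).card) hr]
    have := Finset.card_nsmul_le_sum (S.erase r) (fun s => (f s).card) m hscard
    simp only [smul_eq_mul] at this
    omega
  have hce : (S.erase r).card + 1 = S.card := by
    rw [Finset.card_erase_of_mem hr]
    have : 1 ≤ S.card := Finset.card_pos.mpr ⟨r, hr⟩
    omega
  have : S.card * m = (S.erase r).card * m + m := by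
    rw [← hce]; ring
  omega

lemma nstar_le_aux {N m : ℕ} (hm : 1 ≤ m) (hN : m + 1 ≤ N) {G : SimpleGraph (Fin N)}
    (hc : G.Connected) :
    sSup {k | ∃ S : Finset (Fin N), S.card = k ∧
      ∀ i ∈ S, ∀ j ∈ S, i ≠ j → 2 * m ≤ G.dist i j} ≤ (N - 1) / m := by
  have h0 : (0:ℕ) ∈ {k | ∃ S : Finset (Fin N), S.card = k ∧
      ∀ i ∈ S, ∀ j ∈ S, i ≠ j → 2 * m ≤ G.dist i j} := ⟨∅, by simp, by simp⟩
  apply csSup_le ⟨0, h0⟩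
  rintro k ⟨S, rfl, hS⟩
  rw [Nat.le_div_iff_mul_le (by omega)]
  exact tree_bound hm hN hc hS


/-! ### Spider: connectivity and distances -/

section Spider

variable {N m : ℕ}

lemma exists_walk_root (hm : 1 ≤ m) (hN : 0 < N) :
    ∀ v : Fin N, ∃ p : (spider N m).Walk ⟨0, hN⟩ v, p.length = D m (v:ℕ) := by
  suffices H : ∀ n : ℕ, ∀ v : Fin N, (v:ℕ) = n →
      ∃ p : (spider N m).Walk ⟨0, hN⟩ v, p.length = D m (v:ℕ) by
    exact fun v => H v v rfl
  intro n
  induction n using Nat.strong_induction_on with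
  | _ n ih =>
    intro v hv
    rcases Nat.eq_zero_or_pos n with rfl | hn
    · have : v = ⟨0, hN⟩ := Fin.ext (by simp [hv])
      subst this
      exact ⟨SimpleGraph.Walk.nil, by simp [hv, D]⟩
    · have hPlt : P m n < n := P_lt hn
      set pv : Fin N := ⟨P m n, lt_trans hPlt (hv ▸ v.isLt)⟩ with hpv
      obtain ⟨p, hp⟩ := ih (P m n) hPlt pv rfl
      have hadj : (spider N m).Adj pv v := adj_parent (by omega) (by simp [hpv, hv])
      refine ⟨p.concat hadj, ?_⟩
      rw [SimpleGraph.Walk.length_concat, hp]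
      simp only [hpv, hv]
      exact D_P hm hn

lemma spider_connected (hm : 1 ≤ m) (hN : 0 < N) : (spider N m).Connected := by
  have hreach : ∀ v : Fin N, (spider N m).Reachable ⟨0, hN⟩ v := by
    intro v
    obtain ⟨p, -⟩ := exists_walk_root hm hN v
    exact ⟨p⟩
  have : Nonempty (Fin N) := ⟨⟨0, hN⟩⟩
  exact SimpleGraph.Connected.mk (fun u v => (hreach u).symm.trans (hreach v))

lemma depth_potential (hm : 1 ≤ m) {a b : Fin N} (h : (spider N m).Adj a b) :
    |((D m (a:ℕ) : ℤ)) - (D m (b:ℕ) : ℤ)| ≤ 1 := by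
  rcases adj_cases h with ⟨hb, ha⟩ | ⟨ha, hb⟩
  · have := D_P (v := (b:ℕ)) hm (by omega)
    rw [← ha] at this
    rw [abs_sub_le_iff]
    constructor <;> [skip; skip] <;> omega
  · have := D_P (v := (a:ℕ)) hm (by omega)
    rw [← hb] at this
    rw [abs_sub_le_iff]
    constructor <;> [skip; skip] <;> omega

lemma dist_root (hm : 1 ≤ m) (hN : 0 < N) (v : Fin N) :
    (spider N m).dist ⟨0, hN⟩ v = D m (v:ℕ) := by
  obtain ⟨p, hp⟩ := exists_walk_root hm hN v
  apply le_antisymm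
  · have := (spider N m).dist_le p
    omega
  · have hr : (spider N m).Reachable ⟨0, hN⟩ v := ⟨p⟩
    have hpot := dist_ge_potential (G := spider N m) (fun u : Fin N => (D m (u:ℕ) : ℤ))
      (fun a b h => depth_potential hm h) hr
    have h4 := le_trans (neg_le_abs _) hpot
    have h3 : D m ((⟨0, hN⟩ : Fin N) : ℕ) = 0 := rfl
    simp only [neg_sub, h3, Nat.cast_zero, sub_zero] at h4
    exact_mod_cast h4

/-- branch potential: `D` on branch `c`, `-D` elsewhere -/
noncomputable def f2 (m c : ℕ) (v : ℕ) : ℤ :=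
  if v ≠ 0 ∧ Br m v = c then (D m v : ℤ) else -(D m v)

lemma branch_potential_aux (hm : 1 ≤ m) (c : ℕ) {a b : ℕ}
    (hb : b ≠ 0) (ha : a = P m b) : |f2 m c a - f2 m c b| ≤ 1 := by
  have hD := D_P (v := b) hm (by omega)
  rw [← ha] at hD
  unfold P at ha
  by_cases h : (b-1) % m = 0
  · rw [if_pos h] at ha
    subst ha
    have h0 : f2 m c 0 = 0 := by unfold f2 D; simp
    have h1 : D m b = 1 := by
      unfold D at hD ⊢
      rw [if_neg hb, h]
    rw [h0]
    unfold f2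
    split <;> simp [h1]
  · rw [if_neg h] at ha
    have hb2 : 2 ≤ b := by
      rcases Nat.lt_or_ge b 2 with h2 | h2
      · interval_cases b <;> simp_all
      · exact h2
    have ha0 : a ≠ 0 := by omega
    have hBr : Br m a = Br m b := ha ▸ Br_P hm h
    unfold f2
    have hcond : ((a ≠ 0 ∧ Br m a = c)) ↔ ((b ≠ 0 ∧ Br m b = c)) := by
      rw [hBr]; simp [hb, ha0]
    by_cases hc : b ≠ 0 ∧ Br m b = c
    · rw [if_pos (hcond.mpr hc), if_pos hc, abs_sub_le_iff]
      constructor <;> omega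
    · rw [if_neg (fun hh => hc (hcond.mp hh)), if_neg hc, abs_sub_le_iff]
      constructor <;> omega

lemma branch_potential (hm : 1 ≤ m) (c : ℕ) {a b : Fin N} (h : (spider N m).Adj a b) :
    |f2 m c (a:ℕ) - f2 m c (b:ℕ)| ≤ 1 := by
  rcases adj_cases h with ⟨hb, ha⟩ | ⟨ha, hb⟩
  · exact branch_potential_aux hm c hb ha
  · rw [abs_sub_comm]
    exact branch_potential_aux hm c ha hb


/-! ### Acyclicity -/

lemma cut_lemma {V : Type*} {G : SimpleGraph V} (X : Set V) {a : V} (ha : a ∉ X)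
    (e : Sym2 V) (hcross : ∀ u v, G.Adj u v → u ∈ X → v ∉ X → s(u,v) = e) :
    ∀ (u : V) (p : G.Walk u a), u ∈ X → e ∈ p.edges := by
  suffices H : ∀ (u b : V) (p : G.Walk u b), u ∈ X → b ∉ X → e ∈ p.edges by
    exact fun u p hu => H u a p hu ha
  intro u b p
  induction p with
  | nil => intro hu hb; exact absurd hu hb
  | cons h q ih =>
    rename_i x y _
    intro hx hb
    by_cases hy : y ∈ X
    · rw [SimpleGraph.Walk.edges_cons]
      exact List.mem_cons_of_mem _ (ih hy hb)
    · rw [SimpleGraph.Walk.edges_cons, ← hcross x y h hx hy]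
      exact List.mem_cons_self

/-- any edge of the spider crossing out of the descendant set of `w` is the
parent edge of `w` -/
lemma crossing (hm : 1 ≤ m) {w u v : Fin N} (hw : (w:ℕ) ≠ 0)
    (hadj : (spider N m).Adj u v)
    (hu : (w:ℕ) ≤ (u:ℕ) ∧ Br m (u:ℕ) = Br m (w:ℕ))
    (hv : ¬((w:ℕ) ≤ (v:ℕ) ∧ Br m (v:ℕ) = Br m (w:ℕ))) :
    (u:ℕ) = (w:ℕ) ∧ (v:ℕ) = P m (w:ℕ) := by
  obtain ⟨hwu, hBu⟩ := hu
  rcases adj_cases hadj with ⟨hv0, hup⟩ | ⟨hu0, hvp⟩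
  · -- v ≠ 0 and u = P v
    exfalso
    unfold P at hup
    by_cases h : ((v:ℕ)-1) % m = 0
    · rw [if_pos h] at hup
      omega
    · rw [if_neg h] at hup
      have hBv : Br m ((v:ℕ)-1) = Br m (v:ℕ) := Br_P hm h
      push_neg at hv
      have hBvw : Br m (v:ℕ) = Br m (w:ℕ) := by rw [← hBv, ← hup]; exact hBu
      exact hv (by omega) hBvw
  · -- u ≠ 0 and v = P u
    unfold P at hvp
    by_cases h : ((u:ℕ)-1) % m = 0
    · rw [if_pos h] at hvp
      -- u is the first vertex of its branch, so u = w
      have e1 := Nat.div_add_mod ((u:ℕ)-1) m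
      have e2 := Nat.div_add_mod ((w:ℕ)-1) m
      have hBr : ((u:ℕ)-1) / m = ((w:ℕ)-1) / m := hBu
      rw [hBr, h] at e1
      generalize hA : m * (((w:ℕ)-1)/m) = A at e1 e2
      have huw : (u:ℕ) = (w:ℕ) := by omega
      refine ⟨huw, ?_⟩
      unfold P
      rw [← huw, if_pos h, hvp]
    · rw [if_neg h] at hvp
      have hBv : Br m ((u:ℕ)-1) = Br m (u:ℕ) := Br_P hm h
      push_neg at hv
      rw [hvp] at hv ⊢
      have hlt : (u:ℕ) - 1 < (w:ℕ) := by
        by_contra hge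
        exact (hv (by omega)) (by rw [hBv]; exact hBu)
      have huw : (u:ℕ) = (w:ℕ) := by omega
      refine ⟨huw, ?_⟩
      unfold P
      rw [← huw, if_neg h]

lemma bridge_parent (hm : 1 ≤ m) {w pw : Fin N} (hw : (w:ℕ) ≠ 0)
    (hpw : (pw:ℕ) = P m (w:ℕ)) : (spider N m).IsBridge s(pw, w) := by
  rw [SimpleGraph.isBridge_iff_adj_and_forall_walk_mem_edges]
  intro p
  have hXw : (w:ℕ) ≤ (w:ℕ) ∧ Br m (w:ℕ) = Br m (w:ℕ) := ⟨le_refl _, rfl⟩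
  have hXpw : ¬((w:ℕ) ≤ (pw:ℕ) ∧ Br m (pw:ℕ) = Br m (w:ℕ)) := by
    intro ⟨h1, _⟩
    have := P_lt (m := m) (v := (w:ℕ)) (by omega)
    omega
  have hmem := cut_lemma {x : Fin N | (w:ℕ) ≤ (x:ℕ) ∧ Br m (x:ℕ) = Br m (w:ℕ)}
    hXpw s(w, pw) ?_ w p.reverse hXw
  · rw [SimpleGraph.Walk.edges_reverse, List.mem_reverse] at hmem
    rwa [Sym2.eq_swap]
  · intro u v hadj hu hv
    obtain ⟨h1, h2⟩ := crossing hm hw hadj hu hv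
    have hu' : u = w := Fin.ext h1
    have hv' : v = pw := Fin.ext (by rw [h2, hpw])
    rw [hu', hv']

lemma spider_acyclic (hm : 1 ≤ m) : (spider N m).IsAcyclic := by
  rw [SimpleGraph.isAcyclic_iff_forall_adj_isBridge]
  intro v w hadj
  rcases adj_cases hadj with ⟨hw0, hvp⟩ | ⟨hv0, hwp⟩
  · exact bridge_parent hm hw0 hvp
  · rw [Sym2.eq_swap]
    exact bridge_parent hm hv0 hwp


/-! ### Degrees in the spider -/

lemma neighbor_val (hm : 1 ≤ m) {v u : Fin N} (hv : (v:ℕ) ≠ 0)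
    (h : (spider N m).Adj v u) : (u:ℕ) = P m (v:ℕ) ∨ (u:ℕ) = (v:ℕ)+1 := by
  rcases adj_cases h with ⟨hu0, hvp⟩ | ⟨hv0, hup⟩
  · right
    unfold P at hvp
    by_cases hh : ((u:ℕ)-1) % m = 0
    · rw [if_pos hh] at hvp; omega
    · rw [if_neg hh] at hvp; omega
  · left; exact hup

lemma degree_le_two (hm : 1 ≤ m) {v : Fin N} (hv : (v:ℕ) ≠ 0) :
    ((spider N m).neighborSet v).ncard ≤ 2 := by
  have hvN := v.isLt
  have hpv : P m (v:ℕ) < N := lt_trans (P_lt (by omega)) hvN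
  by_cases hs : (v:ℕ)+1 < N
  · have hsub : (spider N m).neighborSet v ⊆
        ({⟨P m (v:ℕ), hpv⟩, ⟨(v:ℕ)+1, hs⟩} : Set (Fin N)) := by
      intro u hu
      rcases neighbor_val hm hv hu with h | h
      · exact Or.inl (Fin.ext h)
      · exact Or.inr (Fin.ext h)
    calc ((spider N m).neighborSet v).ncard ≤ _ := Set.ncard_le_ncard hsub (Set.toFinite _)
    _ ≤ 2 := by
      apply le_trans (Set.ncard_insert_le _ _)
      simp
  · have hsub : (spider N m).neighborSet v ⊆ ({⟨P m (v:ℕ), hpv⟩} : Set (Fin N)) := by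
      intro u hu
      rcases neighbor_val hm hv hu with h | h
      · exact Fin.ext h
      · exact absurd (h ▸ u.isLt) (by omega)
    calc ((spider N m).neighborSet v).ncard ≤ _ := Set.ncard_le_ncard hsub (Set.toFinite _)
    _ ≤ 2 := by simp

lemma succ_mod (hm : 1 ≤ m) {v : ℕ} (hv : v ≠ 0) (hd : (v-1) % m + 1 < m) :
    v % m = (v-1) % m + 1 := by
  have e1 := Nat.div_add_mod (v-1) m
  generalize hq : (v-1)/m = q at e1
  generalize hr : (v-1) % m = r at e1 hd ⊢
  have e2 : v = m * q + (r + 1) := by omega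
  rw [e2, Nat.mul_add_mod]
  exact Nat.mod_eq_of_lt (by omega)

lemma degree_ge_two (hm : 1 ≤ m) {v : Fin N} (hv : (v:ℕ) ≠ 0)
    (hd : D m (v:ℕ) < m) (hlt : (v:ℕ)+1 < N) :
    2 ≤ ((spider N m).neighborSet v).ncard := by
  have hpvlt : P m (v:ℕ) < N := lt_trans (P_lt (by omega)) v.isLt
  set pv : Fin N := ⟨P m (v:ℕ), hpvlt⟩ with hpv
  set sv : Fin N := ⟨(v:ℕ)+1, hlt⟩ with hsv
  have hDv : (v:ℕ) % m = ((v:ℕ)-1) % m + 1 := by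
    apply succ_mod hm hv
    unfold D at hd
    rw [if_neg hv] at hd
    omega
  have hadj1 : (spider N m).Adj v pv := (adj_parent hv rfl).symm
  have hadj2 : (spider N m).Adj v sv := by
    apply adj_parent (by simp [hsv])
    show (v:ℕ) = P m ((v:ℕ)+1)
    unfold P
    rw [Nat.add_sub_cancel, if_neg (by omega)]
  have hne : pv ≠ sv := by
    intro h
    have := P_lt (m := m) (v := (v:ℕ)) (by omega)
    have := congrArg (fun x : Fin N => (x:ℕ)) h
    simp [hpv, hsv] at this
    omega
  have hsub : ({pv, sv} : Set (Fin N)) ⊆ (spider N m).neighborSet v := by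
    rintro u (rfl | rfl)
    · exact hadj1
    · exact hadj2
  calc 2 = ({pv, sv} : Set (Fin N)).ncard := (Set.ncard_pair hne).symm
  _ ≤ _ := Set.ncard_le_ncard hsub (Set.toFinite _)


/-! ### Tips of the spider -/

lemma tip_arith (hm : 1 ≤ m) (b : ℕ) : (b+1)*m - 1 = m*b + (m-1) := by
  have : (b+1)*m = m*b + m := by ring
  omega

lemma tip_ne_zero (hm : 1 ≤ m) (b : ℕ) : (b+1)*m ≠ 0 := by
  intro h
  rcases Nat.mul_eq_zero.mp h with h|h <;> omega

lemma D_tip (hm : 1 ≤ m) (b : ℕ) : D m ((b+1)*m) = m := by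
  unfold D
  rw [if_neg (tip_ne_zero hm b), tip_arith hm b,
    Nat.mul_add_mod, Nat.mod_eq_of_lt (by omega)]
  omega

lemma Br_tip (hm : 1 ≤ m) (b : ℕ) : Br m ((b+1)*m) = b := by
  unfold Br
  rw [tip_arith hm b, Nat.mul_add_div (by omega), Nat.div_eq_of_lt (by omega)]
  omega

lemma tip_dist (hm : 1 ≤ m) (hN : 0 < N) {x y : Fin N} {bx by' : ℕ}
    (hx : (x:ℕ) = (bx+1)*m) (hy : (y:ℕ) = (by'+1)*m) (hbb : bx ≠ by') :
    2*m ≤ (spider N m).dist x y := by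
  have hr : (spider N m).Reachable x y :=
    ((spider_connected hm hN).preconnected x y)
  have hpot := dist_ge_potential (G := spider N m) (fun u : Fin N => f2 m bx (u:ℕ))
    (fun a b h => branch_potential hm bx h) hr
  have hfx : f2 m bx (x:ℕ) = (m : ℤ) := by
    unfold f2
    rw [hx, if_pos ⟨tip_ne_zero hm bx, Br_tip hm bx⟩, D_tip hm bx]
  have hfy : f2 m bx (y:ℕ) = -(m : ℤ) := by
    unfold f2
    rw [hy, if_neg (by rw [Br_tip hm by']; tauto), D_tip hm by']
  have h2 : ((2*m : ℕ) : ℤ) ≤ |f2 m bx (x:ℕ) - f2 m bx (y:ℕ)| := by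
    rw [hfx, hfy]
    rw [show (m:ℤ) - -(m:ℤ) = ((2*m : ℕ) : ℤ) by push_cast; ring]
    exact le_abs_self _
  have := le_trans h2 hpot
  exact_mod_cast this


end Spider

end TreeNstar

/-- A balanced starlike tree with root `r` and height `m`: every non-root vertex
has degree at most 2, every vertex is at depth at most `m`, some vertex is at
depth exactly `m`, and at most one leaf is at depth less than `m`. -/
def IsBalancedStarlike {N : ℕ} (T : SimpleGraph (Fin N)) (r : Fin N) (m : ℕ) : Prop :=
  (∀ v, v ≠ r → (T.neighborSet v).ncard ≤ 2) ∧
  (∀ v, T.dist r v ≤ m) ∧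
  (∃ v, T.dist r v = m) ∧
  (∀ v w, v ≠ r → w ≠ r → (T.neighborSet v).ncard ≤ 1 → (T.neighborSet w).ncard ≤ 1 →
    T.dist r v < m → T.dist r w < m → v = w)

/-- For even `h = 2m`, among all trees on `N` vertices the maximum possible
`nstar` equals `⌊(N-1)/m⌋`, attained by a balanced starlike tree of height `m`. -/
theorem tree_nstar_max
    (N m : ℕ) (hm : 1 ≤ m) (hN : m + 1 ≤ N) :
    (∀ T : SimpleGraph (Fin N), T.IsTree → nstar T (2 * m) ≤ (N - 1) / m) ∧
    ∃ (T : SimpleGraph (Fin N)) (r : Fin N), T.IsTree ∧ IsBalancedStarlike T r m ∧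
      nstar T (2 * m) = (N - 1) / m := by
  open TreeNstar in
  have hN0 : 0 < N := by omega
  constructor
  · intro T hT
    exact TreeNstar.nstar_le_aux hm hN hT.1
  · refine ⟨TreeNstar.spider N m, ⟨0, hN0⟩,
      ⟨TreeNstar.spider_connected hm hN0, TreeNstar.spider_acyclic hm⟩, ?_, ?_⟩
    · refine ⟨?_, ?_, ?_, ?_⟩
      · intro v hv
        exact TreeNstar.degree_le_two hm (by
          intro h; exact hv (Fin.ext h))
      · intro v
        rw [TreeNstar.dist_root hm hN0]
        exact TreeNstar.D_le hm
      · refine ⟨⟨m, by omega⟩, ?_⟩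
        rw [TreeNstar.dist_root hm hN0]
        have := TreeNstar.D_tip hm 0
        simpa using this
      · have key : ∀ v : Fin N, v ≠ ⟨0, hN0⟩ →
            ((TreeNstar.spider N m).neighborSet v).ncard ≤ 1 →
            (TreeNstar.spider N m).dist ⟨0, hN0⟩ v < m → (v:ℕ) = N - 1 := by
          intro v hv hdeg hdist
          rw [TreeNstar.dist_root hm hN0] at hdist
          have hv0 : (v:ℕ) ≠ 0 := by
            intro h; exact hv (Fin.ext h)
          by_contra hne
          have hlt : (v:ℕ) + 1 < N := by
            have := v.isLt; omega
          have := TreeNstar.degree_ge_two hm hv0 hdist hlt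
          omega
        intro v w hv hw hdv hdw hlv hlw
        exact Fin.ext ((key v hv hdv hlv).trans (key w hw hdw hlw).symm)
    · set q := (N-1)/m with hq
      have hq1 : 1 ≤ q := by
        rw [hq, Nat.le_div_iff_mul_le (by omega)]
        omega
      set t : ℕ → Fin N := fun b => ⟨((b+1)*m) % N, Nat.mod_lt _ hN0⟩ with ht
      have htval : ∀ b < q, ((t b : Fin N) : ℕ) = (b+1)*m := by
        intro b hb
        have h1 : (b+1)*m ≤ q*m := Nat.mul_le_mul_right _ (by omega)
        have h2 : q*m ≤ N-1 := Nat.div_mul_le_self (N-1) m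
        simp only [ht]
        exact Nat.mod_eq_of_lt (by omega)
      set S : Finset (Fin N) := (Finset.range q).image t with hS
      have hcard : S.card = q := by
        rw [hS, Finset.card_image_of_injOn, Finset.card_range]
        intro a ha b hb hab
        simp only [Finset.coe_range, Set.mem_Iio] at ha hb
        have h2 : ((t a : Fin N) : ℕ) = ((t b : Fin N) : ℕ) := by rw [hab]
        rw [htval a ha, htval b hb] at h2
        have hm0 : 0 < m := by omega
        have := Nat.eq_of_mul_eq_mul_right hm0 h2
        omega
      have hpair : ∀ i ∈ S, ∀ j ∈ S, i ≠ j →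
          2*m ≤ (TreeNstar.spider N m).dist i j := by
        intro i hi j hj hij
        rw [hS, Finset.mem_image] at hi hj
        obtain ⟨a, ha, rfl⟩ := hi
        obtain ⟨b, hb, rfl⟩ := hj
        rw [Finset.mem_range] at ha hb
        have hab : a ≠ b := fun h => hij (by rw [h])
        exact TreeNstar.tip_dist hm hN0 (htval a ha) (htval b hb) hab
      apply le_antisymm
      · exact TreeNstar.nstar_le_aux hm hN (TreeNstar.spider_connected hm hN0)
      · apply le_csSup
        · refine ⟨N, ?_⟩
          rintro k ⟨S', rfl, -⟩
          exact le_trans (Finset.card_le_univ S') (by simp)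
        · exact ⟨S, hcard, hpair⟩
end

section
/- For a pooling method on trees with edge receptive field r = 1, the minimal sampling ratio k* ensuring at least one edge in the pooled graph for every tree structure on N vertices tends to 1 as N → ∞; for edge receptive field r = 3, k* tends to 1/2 as N → ∞. -/
open Filter

/-- The minimal sampling ratio `k*` for trees on `N` vertices with edge receptive
field `r`: the infimum of ratios `k` such that any selection of `⌈kN⌉` vertices in
any tree on `N` vertices contains two vertices at tree distance at most `r`. -/
noncomputable def treeKStar (N r : ℕ) : ℝ :=
  sInf {k : ℝ | 0 ≤ k ∧
    ∀ T : SimpleGraph (Fin N), T.IsTree →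
      ∀ S : Finset (Fin N), S.card = ⌈k * (N : ℝ)⌉₊ →
        ∃ i ∈ S, ∃ j ∈ S, i ≠ j ∧ T.dist i j ≤ r}

namespace TreeKStarAux

open SimpleGraph

/-- The set whose infimum defines `treeKStar`. -/
def Aset (N r : ℕ) : Set ℝ :=
  {k : ℝ | 0 ≤ k ∧
    ∀ T : SimpleGraph (Fin N), T.IsTree →
      ∀ S : Finset (Fin N), S.card = ⌈k * (N : ℝ)⌉₊ →
        ∃ i ∈ S, ∃ j ∈ S, i ≠ j ∧ T.dist i j ≤ r}

lemma treeKStar_eq (N r : ℕ) : treeKStar N r = sInf (Aset N r) := rfl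

lemma bddBelow_Aset (N r : ℕ) : BddBelow (Aset N r) :=
  ⟨0, fun _ hk => hk.1⟩

/-- Number of legs of the spider. -/
def nq (N : ℕ) : ℕ := (N - 1) / 2

lemma two_nq_lt {N : ℕ} (h1 : 1 ≤ N) : 2 * nq N < N := by
  rw [nq]; omega

/-- The leaves of the spider. -/
def leaves (N : ℕ) (h1 : 1 ≤ N) : Finset (Fin N) :=
  (Finset.Ioc (nq N) (2 * nq N)).attachFin
    (fun m hm => lt_of_le_of_lt (Finset.mem_Ioc.mp hm).2 (two_nq_lt h1))

lemma card_leaves {N : ℕ} (h1 : 1 ≤ N) : (leaves N h1).card = nq N := by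
  rw [leaves, Finset.card_attachFin, Nat.card_Ioc]
  omega

lemma mem_leaves {N : ℕ} {h1 : 1 ≤ N} {v : Fin N} :
    v ∈ leaves N h1 ↔ nq N < v.val ∧ v.val ≤ 2 * nq N := by
  rw [leaves, Finset.mem_attachFin, Finset.mem_Ioc]

/-- Parent function of the spider graph. -/
def spiderP (N : ℕ) [NeZero N] : Fin N → Fin N := fun v =>
  if q : nq N < v.val ∧ v.val ≤ 2 * nq N then
    ⟨v.val - nq N, lt_of_le_of_lt (Nat.sub_le _ _) v.isLt⟩
  else 0

lemma spiderP_lt {N : ℕ} [NeZero N] : ∀ v : Fin N, v ≠ 0 → spiderP N v < v := by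
  intro v hv
  have hv0 : v.val ≠ 0 := fun h0 => hv (Fin.ext h0)
  rw [spiderP, Fin.lt_def]
  split_ifs with h
  · simp only []
    omega
  · simp only [Fin.val_zero]
    omega


/-! ### Functional trees -/

variable {N : ℕ}

/-- The graph on `Fin N` determined by a parent function `p`. -/
@[reducible] def ptree [NeZero N] (p : Fin N → Fin N) : SimpleGraph (Fin N) where
  Adj u v := u ≠ v ∧ ((u ≠ 0 ∧ p u = v) ∨ (v ≠ 0 ∧ p v = u))
  symm := by
    constructor
    intro u v h
    exact ⟨h.1.symm, h.2.symm⟩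
  loopless := ⟨fun v h => h.1 rfl⟩

variable [NeZero N] {p : Fin N → Fin N}

lemma ptree_adj_parent (hp : ∀ v : Fin N, v ≠ 0 → p v < v) {v : Fin N} (hv : v ≠ 0) :
    (ptree p).Adj v (p v) :=
  ⟨(hp v hv).ne', Or.inl ⟨hv, rfl⟩⟩

lemma ptree_connected (hp : ∀ v : Fin N, v ≠ 0 → p v < v) : (ptree p).Connected := by
  rw [connected_iff]
  refine ⟨?_, ⟨0⟩⟩
  have key : ∀ n (v : Fin N), v.val = n → (ptree p).Reachable 0 v := by
    intro n
    induction n using Nat.strong_induction_on with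
    | _ n ih =>
      intro v hv
      by_cases h0 : v = 0
      · subst h0; exact Reachable.refl _
      · have hlt : (p v).val < n := by
          have := hp v h0
          rw [Fin.lt_def, hv] at this
          exact this
        exact (ih (p v).val hlt (p v) rfl).trans
          ((ptree_adj_parent hp h0).symm.reachable)
  intro u v
  exact (key _ u rfl).symm.trans (key _ v rfl)

lemma ptree_acyclic (hp : ∀ v : Fin N, v ≠ 0 → p v < v) : (ptree p).IsAcyclic := by
  classical
  intro v c hc
  have hvs : v ∈ c.support := Walk.start_mem_support c
  obtain ⟨m, hmem, hmax⟩ : ∃ m ∈ c.support, ∀ x ∈ c.support, x ≤ m := by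
    have hne : c.support.toFinset.Nonempty := ⟨v, List.mem_toFinset.mpr hvs⟩
    exact ⟨c.support.toFinset.max' hne, List.mem_toFinset.mp (Finset.max'_mem _ hne),
      fun x hx => Finset.le_max' _ x (List.mem_toFinset.mpr hx)⟩
  have hadjm : ∀ x, (ptree p).Adj m x → x ∈ c.support → x = p m := by
    intro x hadj hxs
    rcases hadj.2 with ⟨_, h⟩ | ⟨hx0, h⟩
    · exact h.symm
    · have h1 := hp x hx0
      have h2 := hmax x hxs
      rw [← h] at h2
      exact absurd (h1.trans_le h2) (lt_irrefl _)
  have hc' := hc.rotate hmem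
  have hE : ∀ e ∈ (c.rotate m hmem).edges, e ∈ c.edges :=
    fun e he => ((c.rotate_edges m hmem).perm.mem_iff).mp he
  cases hcc : c.rotate m hmem with
  | nil =>
    rw [hcc] at hc'
    exact Walk.IsCycle.not_of_nil hc'
  | @cons _ a _ hadj q =>
    rw [hcc] at hc' hE
    have haS : a ∈ c.support := by
      have hm : s(m, a) ∈ (Walk.cons hadj q).edges := by
        rw [Walk.edges_cons]; exact List.mem_cons_self
      exact Walk.snd_mem_support_of_mem_edges c (hE _ hm)
    have ha : a = p m := hadjm a hadj haS
    have h3 : 3 ≤ (Walk.cons hadj q).length := hc'.three_le_length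
    rw [Walk.length_cons] at h3
    cases hqq : q.reverse with
    | nil =>
      have h0 : q.reverse.length = 0 := by rw [hqq]; rfl
      rw [Walk.length_reverse] at h0
      omega
    | @cons _ b _ hadj2 q2 =>
      have hbq : s(m, b) ∈ q.edges := by
        have h1 : s(m, b) ∈ q.reverse.edges := by
          rw [hqq, Walk.edges_cons]; exact List.mem_cons_self
        rwa [Walk.edges_reverse, List.mem_reverse] at h1
      have hbS : b ∈ c.support := by
        have hm : s(m, b) ∈ (Walk.cons hadj q).edges := by
          rw [Walk.edges_cons]; exact List.mem_cons_of_mem _ hbq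
        exact Walk.snd_mem_support_of_mem_edges c (hE _ hm)
      have hb : b = p m := hadjm b hadj2 hbS
      have hnd : s(m, a) ∉ q.edges := by
        have hnd' := hc'.isTrail.edges_nodup
        rw [Walk.edges_cons] at hnd'
        exact (List.nodup_cons.mp hnd').1
      have hba : b = a := hb.trans ha.symm
      rw [hba] at hbq
      exact hnd hbq

lemma ptree_isTree (hp : ∀ v : Fin N, v ≠ 0 → p v < v) : (ptree p).IsTree :=
  ⟨ptree_connected hp, ptree_acyclic hp⟩

/-! ### Walks and distances -/

lemma walk_lower {V : Type*} {G : SimpleGraph V} (f : V → ℤ)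
    (hf : ∀ a b, G.Adj a b → |f a - f b| ≤ 1) :
    ∀ {u v : V} (q : G.Walk u v), |f u - f v| ≤ (q.length : ℤ) := by
  intro u v q
  induction q with
  | nil => simp
  | @cons u x v hadj q ih =>
    rw [Walk.length_cons]
    push_cast
    calc |f u - f v| ≤ |f u - f x| + |f x - f v| := abs_sub_le _ _ _
      _ ≤ 1 + q.length := add_le_add (hf _ _ hadj) ih
      _ = (q.length : ℤ) + 1 := by ring

lemma dist_lower {V : Type*} {G : SimpleGraph V} (f : V → ℤ)
    (hf : ∀ a b, G.Adj a b → |f a - f b| ≤ 1) {u v : V} (h : G.Reachable u v) :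
    |f u - f v| ≤ (G.dist u v : ℤ) := by
  obtain ⟨q, hq⟩ := h.exists_walk_length_eq_dist
  rw [← hq]
  exact walk_lower f hf q

/-- Ball-counting bound: a set of pairwise `≥ 4`-far vertices in a connected graph on
`Fin N` (with `N ≥ 2`) has at most `N/2` elements. -/
lemma ball_bound {T : SimpleGraph (Fin N)} (hT : T.Connected) (h2 : 2 ≤ N)
    {S : Finset (Fin N)} (hS : ∀ i ∈ S, ∀ j ∈ S, i ≠ j → 4 ≤ T.dist i j) :
    2 * S.card ≤ N := by
  classical
  have hnb : ∀ x : Fin N, ∃ y, T.Adj x y := by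
    intro x
    haveI : Nontrivial (Fin N) := Fin.nontrivial_iff_two_le.mpr h2
    obtain ⟨y, hy⟩ := exists_ne x
    obtain ⟨w⟩ := hT.preconnected x y
    cases w with
    | nil => exact absurd rfl hy
    | cons h q => exact ⟨_, h⟩
  set B : Fin N → Finset (Fin N) := fun x => insert x (T.neighborFinset x) with hB
  have hcard : ∀ x, 2 ≤ (B x).card := by
    intro x
    have hdeg : 0 < T.degree x := T.degree_pos_iff_exists_adj x |>.mpr (hnb x)
    have : (B x).card = T.degree x + 1 := by
      rw [hB]
      rw [Finset.card_insert_of_notMem (T.notMem_neighborFinset_self x)]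
      rw [card_neighborFinset_eq_degree]
    omega
  have hdist : ∀ x z : Fin N, z ∈ B x → T.dist x z ≤ 1 := by
    intro x z hz
    rw [hB] at hz
    simp only [Finset.mem_insert, mem_neighborFinset] at hz
    rcases hz with rfl | h
    · simp [SimpleGraph.dist_self]
    · exact le_of_eq (SimpleGraph.dist_eq_one_iff_adj.mpr h)
  have hdisj : ∀ x ∈ S, ∀ y ∈ S, x ≠ y → Disjoint (B x) (B y) := by
    intro x hx y hy hxy
    rw [Finset.disjoint_left]
    intro z hzx hzy
    have h4 := hS x hx y hy hxy
    have hxz := hdist x z hzx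
    have hyz := hdist y z hzy
    have htri := hT.dist_triangle (u := x) (v := z) (w := y)
    have hzy' : T.dist z y ≤ 1 := by rw [SimpleGraph.dist_comm]; exact hyz
    omega
  have hsum : (S.biUnion B).card = ∑ x ∈ S, (B x).card :=
    Finset.card_biUnion hdisj
  have hlow : 2 * S.card ≤ ∑ x ∈ S, (B x).card := by
    calc 2 * S.card = ∑ _x ∈ S, 2 := by rw [Finset.sum_const, smul_eq_mul, mul_comm]
      _ ≤ ∑ x ∈ S, (B x).card := Finset.sum_le_sum fun x _ => hcard x
  calc 2 * S.card ≤ (S.biUnion B).card := by rw [hsum]; exact hlow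
    _ ≤ Fintype.card (Fin N) := Finset.card_le_univ _
    _ = N := Fintype.card_fin N

/-! ### The star -/

lemma star_hp (h2 : 2 ≤ N) : ∀ v : Fin N, v ≠ 0 → (fun _ : Fin N => (0 : Fin N)) v < v :=
  fun v hv => by simpa using (Fin.pos_iff_ne_zero' v).mpr hv

lemma star_dist (h2 : 2 ≤ N) {i j : Fin N} (hi : i ≠ 0) (hj : j ≠ 0) (hij : i ≠ j) :
    2 ≤ (ptree (fun _ : Fin N => (0 : Fin N))).dist i j := by
  have hcon := ptree_connected (star_hp h2)
  have h0 : 0 < (ptree (fun _ : Fin N => (0 : Fin N))).dist i j := hcon.pos_dist_of_ne hij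
  have h1 : (ptree (fun _ : Fin N => (0 : Fin N))).dist i j ≠ 1 := by
    intro h
    have hadj := SimpleGraph.dist_eq_one_iff_adj.mp h
    rcases hadj.2 with ⟨_, h⟩ | ⟨_, h⟩
    · exact hj h.symm
    · exact hi h.symm
  omega

/-! ### The spider -/

lemma spider_dist (h1 : 1 ≤ N) {i j : Fin N} (hi : i ∈ leaves N h1) (hj : j ∈ leaves N h1)
    (hij : i ≠ j) : 4 ≤ (ptree (spiderP N)).dist i j := by
  have hcon := ptree_connected (p := spiderP N) spiderP_lt
  rw [mem_leaves] at hi hj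
  have hijval : i.val ≠ j.val := fun h => hij (Fin.ext h)
  set F : ℕ → ℤ := fun n =>
    if n = i.val then 0 else if n = i.val - nq N then 1 else if n = j.val - nq N then 3
    else if n = j.val then 4 else 2 with hF
  have key : ∀ a b : Fin N, (ptree (spiderP N)).Adj a b → |F a.val - F b.val| ≤ 1 := by
    have step : ∀ a : Fin N, a ≠ 0 → |F a.val - F (spiderP N a).val| ≤ 1 := by
      intro a ha
      have ha0 : a.val ≠ 0 := fun h0 => ha (Fin.ext h0)
      rw [spiderP]
      split_ifs with h
      · simp only [hF]
        rw [abs_sub_le_iff]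
        constructor <;> (split_ifs <;> omega)
      · simp only [hF, Fin.val_zero]
        rw [abs_sub_le_iff]
        constructor <;> (split_ifs <;> omega)
    intro a b hadj
    rcases hadj.2 with ⟨ha0, hpa⟩ | ⟨hb0, hpb⟩
    · rw [← hpa]; exact step a ha0
    · rw [← hpb, abs_sub_comm]; exact step b hb0
  have hFi : F i.val = 0 := by
    simp only [hF]; split_ifs <;> omega
  have hFj : F j.val = 4 := by
    simp only [hF]; split_ifs <;> omega
  have hd : |F i.val - F j.val| ≤ ((ptree (spiderP N)).dist i j : ℤ) :=
    dist_lower (fun v : Fin N => F v.val) key (hcon.preconnected i j)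
  rw [hFi, hFj] at hd
  norm_num at hd
  exact_mod_cast hd

/-! ### Bounds on the sets -/

omit [NeZero N] in
lemma one_mem_Aset (h2 : 2 ≤ N) : (1 : ℝ) ∈ Aset N 1 := by
  haveI : NeZero N := ⟨by omega⟩
  refine ⟨zero_le_one, ?_⟩
  intro T hT S hScard
  have hSN : S.card = N := by
    rw [hScard, one_mul, Nat.ceil_natCast]
  have hSuniv : S = Finset.univ :=
    Finset.eq_univ_of_card _ (by rw [hSN, Fintype.card_fin])
  have h01 : (⟨0, by omega⟩ : Fin N) ≠ (⟨1, by omega⟩ : Fin N) := by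
    simp [Fin.ext_iff]
  obtain ⟨w⟩ := hT.isConnected.preconnected ⟨0, by omega⟩ ⟨1, by omega⟩
  subst hSuniv
  cases w with
  | cons h q =>
    refine ⟨_, Finset.mem_univ _, _, Finset.mem_univ _, h.ne, ?_⟩
    exact le_of_eq (SimpleGraph.dist_eq_one_iff_adj.mpr h)

omit [NeZero N] in
lemma star_lower (h2 : 2 ≤ N) {k : ℝ} (hk : k ∈ Aset N 1) : 1 - 1 / (N : ℝ) ≤ k := by
  haveI : NeZero N := ⟨by omega⟩
  by_contra hlt
  push_neg at hlt
  have hN0 : (0 : ℝ) < N := by positivity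
  have hkN : k * N ≤ ((N - 1 : ℕ) : ℝ) := by
    have hcast : ((N - 1 : ℕ) : ℝ) = (N : ℝ) - 1 := by
      push_cast [Nat.cast_sub (by omega : 1 ≤ N)]; ring
    rw [hcast]
    have : (1 - 1 / (N : ℝ)) * N = (N : ℝ) - 1 := by field_simp
    nlinarith
  have hm : ⌈k * (N : ℝ)⌉₊ ≤ N - 1 := Nat.ceil_le.mpr hkN
  classical
  have hleafcard : (Finset.univ.filter (fun v : Fin N => v ≠ 0)).card = N - 1 := by
    rw [Finset.filter_ne', Finset.card_erase_of_mem (Finset.mem_univ _), Finset.card_univ,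
      Fintype.card_fin]
  have hcardle : ⌈k * (N : ℝ)⌉₊ ≤ (Finset.univ.filter (fun v : Fin N => v ≠ 0)).card := by
    rw [hleafcard]; omega
  obtain ⟨S, hSsub, hScard⟩ := Finset.exists_subset_card_eq hcardle
  obtain ⟨i, hi, j, hj, hij, hd⟩ := hk.2 (ptree (fun _ : Fin N => (0 : Fin N)))
    (ptree_isTree (star_hp h2)) S hScard
  have hi0 : i ≠ 0 := (Finset.mem_filter.mp (hSsub hi)).2
  have hj0 : j ≠ 0 := (Finset.mem_filter.mp (hSsub hj)).2
  have := star_dist h2 hi0 hj0 hij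
  omega

omit [NeZero N] in
lemma half_mem_Aset (h2 : 2 ≤ N) : (1 / 2 + 2 / (N : ℝ)) ∈ Aset N 3 := by
  haveI : NeZero N := ⟨by omega⟩
  have hN0 : (0 : ℝ) < N := by positivity
  refine ⟨by positivity, ?_⟩
  intro T hT S hScard
  by_contra hno
  push_neg at hno
  have hS4 : ∀ i ∈ S, ∀ j ∈ S, i ≠ j → 4 ≤ T.dist i j := by
    intro i hi j hj hij
    have := hno i hi j hj hij
    omega
  have hb := ball_bound hT.isConnected h2 hS4
  have hle : ((N : ℝ) / 2 + 2) ≤ (S.card : ℝ) := by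
    rw [hScard]
    calc ((N : ℝ) / 2 + 2) = (1 / 2 + 2 / (N : ℝ)) * N := by field_simp
      _ ≤ (⌈(1 / 2 + 2 / (N : ℝ)) * N⌉₊ : ℝ) := Nat.le_ceil _
  have hb' : (2 : ℝ) * S.card ≤ N := by exact_mod_cast hb
  linarith

omit [NeZero N] in
lemma spider_lower (h3 : 3 ≤ N) {k : ℝ} (hk : k ∈ Aset N 3) : 1 / 2 - 1 / (N : ℝ) ≤ k := by
  haveI : NeZero N := ⟨by omega⟩
  have h1 : 1 ≤ N := by omega
  by_contra hlt
  push_neg at hlt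
  have hN0 : (0 : ℝ) < N := by positivity
  have h2q : N ≤ 2 * nq N + 2 := by rw [nq]; omega
  have hkN : k * N ≤ ((nq N : ℕ) : ℝ) := by
    have hq : ((N : ℝ) - 2) / 2 ≤ ((nq N : ℕ) : ℝ) := by
      have : ((N : ℕ) : ℝ) ≤ 2 * ((nq N : ℕ) : ℝ) + 2 := by exact_mod_cast h2q
      linarith
    have : (1 / 2 - 1 / (N : ℝ)) * N = ((N : ℝ) - 2) / 2 := by field_simp
    nlinarith
  have hm : ⌈k * (N : ℝ)⌉₊ ≤ nq N := Nat.ceil_le.mpr hkN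
  obtain ⟨S, hSsub, hScard⟩ :=
    Finset.exists_subset_card_eq (s := leaves N h1) (n := ⌈k * (N : ℝ)⌉₊)
      (by rw [card_leaves]; exact hm)
  obtain ⟨i, hi, j, hj, hij, hd⟩ := hk.2 (ptree (spiderP N))
    (ptree_isTree spiderP_lt) S hScard
  have := spider_dist h1 (hSsub hi) (hSsub hj) hij
  omega

/-! ### Sandwich bounds for `treeKStar` -/

omit [NeZero N] in
lemma kstar_one_bounds (h3 : 3 ≤ N) :
    1 - 1 / (N : ℝ) ≤ treeKStar N 1 ∧ treeKStar N 1 ≤ 1 := by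
  have h2 : 2 ≤ N := by omega
  constructor
  · rw [treeKStar_eq]
    exact le_csInf ⟨1, one_mem_Aset h2⟩ (fun k hk => star_lower h2 hk)
  · rw [treeKStar_eq]
    exact csInf_le (bddBelow_Aset N 1) (one_mem_Aset h2)

omit [NeZero N] in
lemma kstar_three_bounds (h3 : 3 ≤ N) :
    1 / 2 - 1 / (N : ℝ) ≤ treeKStar N 3 ∧ treeKStar N 3 ≤ 1 / 2 + 2 / (N : ℝ) := by
  have h2 : 2 ≤ N := by omega
  constructor
  · rw [treeKStar_eq]
    exact le_csInf ⟨_, half_mem_Aset h2⟩ (fun k hk => spider_lower h3 hk)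
  · rw [treeKStar_eq]
    exact csInf_le (bddBelow_Aset N 3) (half_mem_Aset h2)

end TreeKStarAux

/-- For pooling on trees with edge receptive field `r = 1` the minimal sampling
ratio ensuring an edge in the pooled graph tends to `1` as `N → ∞`; for `r = 3`
it tends to `1/2` as `N → ∞`. -/
theorem tree_kstar_limits :
    Tendsto (fun N : ℕ => treeKStar N 1) atTop (nhds 1) ∧
    Tendsto (fun N : ℕ => treeKStar N 3) atTop (nhds (1 / 2)) := by
  have hinv : Tendsto (fun N : ℕ => 1 / (N : ℝ)) atTop (nhds 0) :=
    tendsto_one_div_atTop_nhds_zero_nat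
  constructor
  · apply tendsto_of_tendsto_of_tendsto_of_le_of_le'
      (g := fun N : ℕ => 1 - 1 / (N : ℝ)) (h := fun _ : ℕ => (1 : ℝ))
    · simpa using tendsto_const_nhds.sub hinv
    · exact tendsto_const_nhds
    · filter_upwards [eventually_ge_atTop 3] with N hN
      exact (TreeKStarAux.kstar_one_bounds hN).1
    · filter_upwards [eventually_ge_atTop 3] with N hN
      exact (TreeKStarAux.kstar_one_bounds hN).2
  · apply tendsto_of_tendsto_of_tendsto_of_le_of_le'
      (g := fun N : ℕ => 1 / 2 - 1 / (N : ℝ)) (h := fun N : ℕ => 1 / 2 + 2 / (N : ℝ))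
    · simpa using tendsto_const_nhds.sub hinv
    · have h2 : Tendsto (fun N : ℕ => 2 / (N : ℝ)) atTop (nhds 0) := by
        have := hinv.const_mul (2 : ℝ)
        simpa [mul_one_div, div_eq_mul_inv] using this
      simpa using tendsto_const_nhds.add h2
    · filter_upwards [eventually_ge_atTop 3] with N hN
      exact (TreeKStarAux.kstar_three_bounds hN).1
    · filter_upwards [eventually_ge_atTop 3] with N hN
      exact (TreeKStarAux.kstar_three_bounds hN).2
end

section
/- If S ∈ ℝ^{N×N} is a cluster assignment matrix and Â ∈ ℝ^{N×N} is an adjacency matrix, and P is an N×N permutation matrix, then the pooled adjacency matrix A^p = Ŝᵀ Â Ŝ (where Ŝ = S(:, î) for a selected index set î) transforms under the graph permutation X → PX, Â → PÂPᵀ, S → PSPᵀ as A^p → Q A^p Qᵀ for the permutation matrix Q = P[î, î] restricted to the selected indices; hence the pooled graph obtained is isomorphic to the original pooled graph (graph permutation equivariance). -/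
open Matrix

/-- Graph permutation equivariance of the pooled adjacency `A^p = Ŝᵀ Â Ŝ`:
under the graph permutation `S → P S Pᵀ`, `Â → P Â Pᵀ`, with the selected index
set permuted correspondingly (`sel' = σ ∘ sel ∘ τ`), the pooled adjacency
transforms as `A^p → Q A^p Qᵀ` for the permutation matrix `Q` of the induced
reordering `τ` of the selected indices; hence the pooled graphs are isomorphic. -/
theorem pooled_adjacency_permutation_equivariant
    (N M : ℕ) (S Ahat : Matrix (Fin N) (Fin N) ℝ)
    (σ : Equiv.Perm (Fin N)) (τ : Equiv.Perm (Fin M))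
    (sel : Fin M → Fin N) (hsel : Function.Injective sel)
    (P : Matrix (Fin N) (Fin N) ℝ) (hP : ∀ a b, P a b = if σ b = a then 1 else 0)
    (S' Ahat' : Matrix (Fin N) (Fin N) ℝ)
    (hS' : S' = P * S * Pᵀ) (hA' : Ahat' = P * Ahat * Pᵀ)
    (sel' : Fin M → Fin N) (hsel' : ∀ t, sel' t = σ (sel (τ t)))
    (Q : Matrix (Fin M) (Fin M) ℝ) (hQ : ∀ s u, Q s u = if τ s = u then 1 else 0) :
    (S'.submatrix id sel')ᵀ * Ahat' * (S'.submatrix id sel')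
      = Q * ((S.submatrix id sel)ᵀ * Ahat * (S.submatrix id sel)) * Qᵀ := by
  have hPentry : ∀ (X : Matrix (Fin N) (Fin N) ℝ) a c,
      (P * X * Pᵀ) a c = X (σ.symm a) (σ.symm c) := by
    intro X a c
    simp only [mul_apply, transpose_apply, hP]
    have h1 : ∀ b, (∑ d, (if σ d = a then (1:ℝ) else 0) * X d b)
        = X (σ.symm a) b := by
      intro b
      rw [Finset.sum_eq_single (σ.symm a)]
      · simp
      · intro d _ hd
        rw [if_neg, zero_mul]
        intro h; exact hd (by simpa using congrArg σ.symm h)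
      · simp
    simp only [h1]
    rw [Finset.sum_eq_single (σ.symm c)]
    · simp
    · intro b _ hb
      rw [if_neg, mul_zero]
      intro h; exact hb (by simpa using congrArg σ.symm h)
    · simp
  have hRHS : ∀ (B : Matrix (Fin M) (Fin M) ℝ) s u,
      (Q * B * Qᵀ) s u = B (τ s) (τ u) := by
    intro B s u
    simp only [mul_apply, transpose_apply, hQ]
    have h1 : ∀ j, (∑ k, (if τ s = k then (1:ℝ) else 0) * B k j) = B (τ s) j := by
      intro j
      rw [Finset.sum_eq_single (τ s)]
      · simp
      · intro k _ hk; rw [if_neg (fun h => hk h.symm), zero_mul]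
      · simp
    simp only [h1]
    rw [Finset.sum_eq_single (τ u)]
    · simp
    · intro j _ hj; rw [if_neg (fun h => hj h.symm), mul_zero]
    · simp
  ext s u
  rw [hRHS]
  have hSe : ∀ a c, S' a c = S (σ.symm a) (σ.symm c) := fun a c => by rw [hS', hPentry]
  have hAe : ∀ a c, Ahat' a c = Ahat (σ.symm a) (σ.symm c) := fun a c => by rw [hA', hPentry]
  simp only [mul_apply, transpose_apply, submatrix_apply, id, hSe, hAe,
    hsel', Equiv.symm_apply_apply]
  rw [← Equiv.sum_comp σ (fun b => _)]
  simp only [Equiv.symm_apply_apply]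
  refine Finset.sum_congr rfl fun b _ => ?_
  congr 1
  rw [← Equiv.sum_comp σ (fun a => _)]
  simp
end
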